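/- Let N ≥ 2 and Λ = (ρ_1,...,ρ_N) with ρ_1 ≤ ... ≤ ρ_N, T = Σ ρ_i, and β_2 = (1/N)(1 − √(2/((N−1)(N−2)))) with N ≥ 3. If σ_1(Λ − β_2(T,...,T)) > 0 and σ_2(Λ − β_2(T,...,T)) > 0, then ρ_2 > 0 and ρ_1 + ρ_j > 0 for every j ≥ 2; i.e., Λ is 2-positive. -/

import Mathlib

noncomputable def sigma1 (N : ℕ) (a : Fin N → ℝ) : ℝ := ∑ i, a i

noncomputable def sigma2 (N : ℕ) (a : Fin N → ℝ) : ℝ :=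
  ∑ i, ∑ j ∈ Finset.univ.filter (fun j => i < j), a i * a j

noncomputable def beta (N k : ℕ) : ℝ :=
  (1 / N) * (1 - Real.sqrt ((k : ℝ) / (((N : ℝ) - 1) * ((N : ℝ) - k))))

lemma sq_sum_eq_aux (N : ℕ) (a : Fin N → ℝ) :
    (∑ i, a i)^2 = (∑ i, (a i)^2) + 2 * sigma2 N a := by
  have h0 : (∑ i, a i)^2 = ∑ i, ∑ j, a i * a j := by
    rw [sq, Finset.sum_mul_sum]
  have hsplit : ∀ i : Fin N, (∑ j, a i * a j) =
      (a i)^2 + ((∑ j ∈ Finset.univ.filter (fun j => i < j), a i * a j)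
        + (∑ j ∈ Finset.univ.filter (fun j => j < i), a i * a j)) := by
    intro i
    have h1 : (∑ j, a i * a j) =
        (∑ j ∈ Finset.univ.filter (fun j => i < j), a i * a j)
          + ∑ j ∈ Finset.univ.filter (fun j => ¬ i < j), a i * a j :=
      (Finset.sum_filter_add_sum_filter_not _ _ _).symm
    have h2 : (Finset.univ.filter (fun j : Fin N => ¬ i < j)) =
        insert i (Finset.univ.filter (fun j => j < i)) := by
      ext j
      simp only [Finset.mem_filter, Finset.mem_insert, Finset.mem_univ, true_and,
        Fin.lt_def, Fin.ext_iff]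
      omega
    rw [h1, h2, Finset.sum_insert (by simp)]
    ring
  have hswap : (∑ i, ∑ j ∈ Finset.univ.filter (fun j => j < i), a i * a j)
      = sigma2 N a := by
    rw [Finset.sum_comm' (s := Finset.univ) (t := fun i => Finset.univ.filter (fun j => j < i))
      (s' := fun j => Finset.univ.filter (fun i => j < i)) (t' := Finset.univ)
      (by intro x y; simp)]
    unfold sigma2
    exact Finset.sum_congr rfl fun j _ => Finset.sum_congr rfl fun i _ => mul_comm _ _
  unfold sigma2
  rw [h0]
  simp_rw [hsplit]
  rw [Finset.sum_add_distrib, Finset.sum_add_distrib, hswap]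
  unfold sigma2
  ring

lemma key_ineq (n s p x Q d : ℝ) (hn : 3 ≤ n) (hs : 0 < s) (hd : 0 < d)
    (hd2 : d^2 = 2*((n-1)*(n-2))) (hQ : Q < s^2)
    (hCS : (s-p)^2 ≤ (n-2)*(Q - x)) (hAM : p^2 ≤ 2*x) :
    s*(2-d) < n*p := by
  have hkey : n*p^2 - 4*s*p + (6-2*n)*s^2 < 0 := by nlinarith
  have hfac : (n*p - s*(2-d))*(n*p - s*(2+d)) = n*(n*p^2 - 4*s*p + (6-2*n)*s^2) := by
    linear_combination (-(s^2)) * hd2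
  by_contra hc
  push_neg at hc
  have hn0 : (0:ℝ) < n := by linarith
  have hA : n*p - s*(2-d) ≤ 0 := by linarith
  have hB : n*p - s*(2+d) < 0 := by nlinarith [mul_pos hs hd]
  have hAB : 0 ≤ (n*p - s*(2-d))*(n*p - s*(2+d)) := by
    nlinarith [mul_nonneg (neg_nonneg.2 hA) (neg_nonneg.2 hB.le)]
  have hneg : n * (n*p^2 - 4*s*p + (6-2*n)*s^2) < 0 := mul_neg_of_pos_of_neg hn0 hkey
  linarith [hfac ▸ hAB]

lemma final_pos (n s p d r : ℝ) (hn : 3 ≤ n) (hplow : s*(2-d) < n*p)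
    (hr : r = p + s/n*(d-2)) : 0 < r := by
  have hn0 : (0:ℝ) < n := by linarith
  have h : n * r = n*p + s*(d-2) := by rw [hr]; field_simp
  nlinarith

set_option maxHeartbeats 1000000

theorem stmt_15 (N : ℕ) (hN : 3 ≤ N) (ρ : Fin N → ℝ)
    (hmono : ∀ i j : Fin N, i ≤ j → ρ i ≤ ρ j)
    (T : ℝ) (hT : T = ∑ i, ρ i)
    (h1 : 0 < sigma1 N (fun i => ρ i - beta N 2 * T))
    (h2 : 0 < sigma2 N (fun i => ρ i - beta N 2 * T)) :
    0 < ρ ⟨1, by omega⟩ ∧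
      ∀ j : Fin N, 1 ≤ (j : ℕ) → 0 < ρ ⟨0, by omega⟩ + ρ j := by
  set n : ℝ := (N : ℝ) with hn
  have hn3 : (3:ℝ) ≤ n := by rw [hn]; exact_mod_cast hN
  set d : ℝ := Real.sqrt (2 * ((n-1)*(n-2))) with hdd
  have hd2 : d^2 = 2 * ((n-1)*(n-2)) := Real.sq_sqrt (by nlinarith)
  have hdpos : 0 < d := Real.sqrt_pos.mpr (by nlinarith)
  have hbeta : beta N 2 = (1/n) * (1 - 2/d) := by
    unfold beta
    push_cast
    congr 2
    have harg : ((2:ℝ))/((n-1)*(n-2)) = (2/d)^2 := by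
      have h12 : (n-1)*(n-2) ≠ 0 := by nlinarith
      have hd0 : d ≠ 0 := by positivity
      rw [div_pow, hd2]
      field_simp
    rw [harg, Real.sqrt_sq (by positivity)]
  set a : Fin N → ℝ := fun i => ρ i - beta N 2 * T with ha
  set s : ℝ := sigma1 N a with hs
  have hs_eq : s = T * (2/d) := by
    rw [hs]; unfold sigma1
    rw [ha]
    rw [Finset.sum_sub_distrib, Finset.sum_const, Finset.card_univ, Fintype.card_fin,
      ← hT, hbeta]
    have hn0 : n ≠ 0 := ne_of_gt (by linarith : (0:ℝ) < n)
    have hd0 : d ≠ 0 := ne_of_gt hdpos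
    rw [nsmul_eq_mul, ← hn]
    field_simp
    ring
  have hspos : 0 < s := h1
  have hTval : T = s * d / 2 := by
    rw [hs_eq]
    field_simp
  have hTpos : 0 < T := by
    rw [hTval]; positivity
  -- indices
  set i0 : Fin N := ⟨0, by omega⟩ with hi0
  set i1 : Fin N := ⟨1, by omega⟩ with hi1
  have hne : i0 ≠ i1 := by simp [hi0, hi1, Fin.ext_iff]
  set p : ℝ := a i0 + a i1 with hp
  set Q : ℝ := ∑ i, (a i)^2 with hQ
  have hident : s^2 = Q + 2 * sigma2 N a := sq_sum_eq_aux N a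
  have hQlt : Q < s^2 := by nlinarith [hident, h2]
  -- complement
  set S : Finset (Fin N) := Finset.univ \ {i0, i1} with hS
  have hsub : ({i0, i1} : Finset (Fin N)) ⊆ Finset.univ := Finset.subset_univ _
  have hsum_pair : ∑ i ∈ ({i0, i1} : Finset (Fin N)), a i = p := Finset.sum_pair hne
  have hsq_pair : ∑ i ∈ ({i0, i1} : Finset (Fin N)), (a i)^2 = (a i0)^2 + (a i1)^2 :=
    Finset.sum_pair hne
  have hsumS : ∑ i ∈ S, a i = s - p := by
    have := Finset.sum_sdiff (f := a) hsub
    rw [hsum_pair] at this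
    have hu : ∑ i ∈ Finset.univ, a i = s := rfl
    linarith [this, hu]
  have hsqS : ∑ i ∈ S, (a i)^2 = Q - ((a i0)^2 + (a i1)^2) := by
    have := Finset.sum_sdiff (f := fun i => (a i)^2) hsub
    rw [hsq_pair] at this
    have hu : ∑ i ∈ Finset.univ, (a i)^2 = Q := rfl
    linarith [this, hu]
  have hcardS : (S.card : ℝ) = n - 2 := by
    rw [hS, Finset.card_sdiff_of_subset hsub, Finset.card_univ, Fintype.card_fin,
      Finset.card_pair hne]
    rw [hn, Nat.cast_sub (by omega : 2 ≤ N)]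
    norm_num
  have hCS : (s - p)^2 ≤ (n - 2) * (Q - ((a i0)^2 + (a i1)^2)) := by
    have := sq_sum_le_card_mul_sum_sq (s := S) (f := a)
    rw [hsumS, hsqS] at this
    rw [← hcardS]
    exact this
  have hAM : p^2 ≤ 2 * ((a i0)^2 + (a i1)^2) := by
    rw [hp]; nlinarith [sq_nonneg (a i0 - a i1)]
  have hplow : s*(2-d) < n*p :=
    key_ineq n s p ((a i0)^2 + (a i1)^2) Q d hn3 hspos hdpos hd2 hQlt hCS hAM
  -- rho_0 + rho_1
  have hr : ρ i0 + ρ i1 = p + 2 * (beta N 2 * T) := by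
    rw [hp, ha]; ring
  have h2bT : 2 * (beta N 2 * T) = s/n * (d - 2) := by
    rw [hbeta, hTval]
    have hn0 : n ≠ 0 := ne_of_gt (by linarith : (0:ℝ) < n)
    have hd0 : d ≠ 0 := ne_of_gt hdpos
    field_simp
  have hr_pos : 0 < ρ i0 + ρ i1 :=
    final_pos n s p d (ρ i0 + ρ i1) hn3 hplow (by rw [hr, h2bT])
  have h01 : ρ i0 ≤ ρ i1 := hmono i0 i1 (by rw [Fin.le_def]; exact Nat.zero_le _)
  constructor
  · linarith
  · intro j hj
    have h1j : ρ i1 ≤ ρ j := hmono i1 j (by rw [Fin.le_def]; exact hj)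
    linarith
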